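/- Let G be a real q×q matrix with He(G) := G + Gᵀ positive definite. Let Q be a symmetric n×n matrix, N a p×q matrix, X an n×p matrix, and Y a q×n matrix. If the block matrix [[Q, X N + Yᵀ Gᵀ], [Nᵀ Xᵀ + G Y, −He(G)]] is negative definite, then Q + He(X N Y) = Q + X N Y + Yᵀ Nᵀ Xᵀ is negative definite. -/

import Mathlib

open Matrix

/-- Convex overbounding sufficient condition: if the block matrix
`[[Q, X N + Yᵀ Gᵀ], [Nᵀ Xᵀ + G Y, −He(G)]]` is negative definite (with `He(G) ≻ 0`),
then `Q + He(X N Y) ≺ 0`. -/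
theorem stmt_0 {n p q : ℕ}
    (Q : Matrix (Fin n) (Fin n) ℝ) (N : Matrix (Fin p) (Fin q) ℝ)
    (X : Matrix (Fin n) (Fin p) ℝ) (Y : Matrix (Fin q) (Fin n) ℝ)
    (G : Matrix (Fin q) (Fin q) ℝ)
    (hQ : Q.IsSymm) (hG : (G + Gᵀ).PosDef)
    (h : (-(fromBlocks Q (X * N + Yᵀ * Gᵀ) (Nᵀ * Xᵀ + G * Y) (-(G + Gᵀ)))).PosDef) :
    (-(Q + (X * N * Y + (X * N * Y)ᵀ))).PosDef := by
  rw [posDef_iff_dotProduct_mulVec]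
  constructor
  · have h1 : (X * N * Y + (X * N * Y)ᵀ).IsHermitian := by
      have := isHermitian_add_transpose_self (X * N * Y)
      rwa [conjTranspose_eq_transpose_of_trivial] at this
    have h2 : Q.IsHermitian := by
      rw [IsHermitian, conjTranspose_eq_transpose_of_trivial]; exact hQ
    exact (h2.add h1).neg
  · intro x hx
    have hz : (Sum.elim x (Y.mulVec x) : Fin n ⊕ Fin q → ℝ) ≠ 0 := by
      intro hc
      apply hx
      funext i
      have := congrFun hc (Sum.inl i)
      simpa using this
    have key := (posDef_iff_dotProduct_mulVec.mp h).2 hz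
    simp only [RCLike.re_to_real, star_trivial] at key ⊢
    convert key using 1
    simp only [neg_mulVec, fromBlocks_mulVec, dotProduct_neg, sumElim_dotProduct_sumElim,
      add_mulVec, transpose_mul, transpose_transpose, dotProduct_add,
      ← mulVec_mulVec, dotProduct_mulVec, vecMul_transpose, Sum.elim_comp_inl, Sum.elim_comp_inr]
    ring
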